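/- The function h(t,γ,λ) = (tγ² + tγλ + λ²/2)/(tγ² + λ²/(2(1−t))) satisfies h(1 − 1/√2, 1/2, (√2−1)/2) = 1/2 + 1/√2 = (1+√2)/2. -/

import Mathlib

theorem stmt_13 :
    (let h : ℝ → ℝ → ℝ → ℝ := fun t γ lam =>
      (t * γ ^ 2 + t * γ * lam + lam ^ 2 / 2) / (t * γ ^ 2 + lam ^ 2 / (2 * (1 - t)))
     h (1 - 1 / Real.sqrt 2) (1 / 2) ((Real.sqrt 2 - 1) / 2) = 1 / 2 + 1 / Real.sqrt 2) ∧
    (1 / 2 + 1 / Real.sqrt 2 : ℝ) = (1 + Real.sqrt 2) / 2 := by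
  have hs : Real.sqrt 2 ^ 2 = 2 := Real.sq_sqrt (by norm_num)
  have hpos : (0:ℝ) < Real.sqrt 2 := by positivity
  have hne : Real.sqrt 2 ≠ 0 := ne_of_gt hpos
  have hgt : 1 < Real.sqrt 2 := by nlinarith [hs, hpos]
  have h4 : Real.sqrt 2 ^ 4 = 4 := by nlinarith [hs]
  have h5 : Real.sqrt 2 ^ 5 = 4 * Real.sqrt 2 := by nlinarith [hs, hpos]
  have h6 : Real.sqrt 2 ^ 6 = 8 := by nlinarith [hs, h4]
  have h7 : Real.sqrt 2 ^ 7 = 8 * Real.sqrt 2 := by nlinarith [hs, h5, hpos]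
  constructor
  · show ((1 - 1 / Real.sqrt 2) * (1/2) ^ 2 + (1 - 1 / Real.sqrt 2) * (1/2) * ((Real.sqrt 2 - 1)/2) + ((Real.sqrt 2 - 1)/2) ^ 2 / 2) / ((1 - 1 / Real.sqrt 2) * (1/2) ^ 2 + ((Real.sqrt 2 - 1)/2) ^ 2 / (2 * (1 - (1 - 1 / Real.sqrt 2)))) = 1 / 2 + 1 / Real.sqrt 2
    rw [div_eq_iff]
    · field_simp
      ring_nf
      linarith [h4, h5, h6, h7, show Real.sqrt 2 ^ 3 = 2 * Real.sqrt 2 by rw [pow_succ, hs]]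
    · have h1 : 0 < 1 - 1 / Real.sqrt 2 := by
        rw [sub_pos, div_lt_one hpos]; exact hgt
      intro h
      have h2 : 0 < ((Real.sqrt 2 - 1) / 2) ^ 2 / (2 * (1 - (1 - 1 / Real.sqrt 2))) := by
        apply div_pos
        · have : Real.sqrt 2 - 1 > 0 := by linarith
          positivity
        · have e : (1 - (1 - 1 / Real.sqrt 2)) = 1 / Real.sqrt 2 := by ring
          rw [e]; positivity
      nlinarith [h1, h2, h]
  · field_simp
    nlinarith [hs, hpos]
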